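/- Let G = (V,E,o) be a finite rooted graph, n ≥ 4, and G_n = (V_n,E_n) the augmented ball graph. Suppose μ ∈ P(X^V) has density with respect to a product measure μ* = ∏_v θ_v of the form dμ/dμ*(x) = ∏_{K∈cl₂(G)} f_K(x_K). Then the marginal μ[V_n] on X^{V_n} has density with respect to μ*[V_n] of the form ∏_{K∈cl₂(G_n)} f⁰_K(x_K), where moreover f⁰_K = f_K for every K ∈ cl₂(G) with K ⊆ V_{n-3}. -/

import Mathlib

open MeasureTheory ProbabilityTheory

section GraphDefs

variable {V : Type*}

/-- The (first) outer boundary of a set of vertices. -/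
def graphBdry (G : SimpleGraph V) (A : Set V) : Set V :=
  {u | u ∉ A ∧ ∃ v ∈ A, G.Adj u v}

/-- The second (double) boundary of a set of vertices. -/
def graphBdry2 (G : SimpleGraph V) (A : Set V) : Set V :=
  graphBdry G A ∪ graphBdry G (A ∪ graphBdry G A)

/-- The square graph: vertices at graph distance 1 or 2 are joined. -/
def sqGraph (G : SimpleGraph V) : SimpleGraph V where
  Adj u v := u ≠ v ∧ G.Reachable u v ∧ G.dist u v ≤ 2
  symm := by
    constructor
    rintro u v ⟨h1, h2, h3⟩
    exact ⟨h1.symm, h2.symm, by rwa [SimpleGraph.dist_comm]⟩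
  loopless := by constructor; rintro u ⟨h, -⟩; exact h rfl

/-- A 2-clique: a set of vertices of diameter at most 2. -/
def TwoClique (G : SimpleGraph V) (K : Set V) : Prop :=
  ∀ u ∈ K, ∀ v ∈ K, u ≠ v → G.Reachable u v ∧ G.dist u v ≤ 2

open scoped Classical in
/-- The finite collection of 2-cliques of a graph on a finite vertex set. -/
noncomputable def cl2Finset (G : SimpleGraph V) [Fintype V] : Finset (Finset V) :=
  Finset.univ.filter fun K => TwoClique G (K : Set V)

end GraphDefs


/-- The ball of radius `n` around the root `o` in `G`. -/
def gball {V : Type*} (G : SimpleGraph V) (o : V) (n : ℕ) : Set V :=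
  {v | G.Reachable o v ∧ G.dist o v ≤ n}

/-- The augmented ball graph `G_n`: the edges of `G` inside the ball `V_n` of radius `n`
about the root, together with all pairs of distinct vertices of the annulus
`U_n = V_n \ V_{n-2}`. -/
def augGraph {V : Type*} (G : SimpleGraph V) (o : V) (n : ℕ) : SimpleGraph V where
  Adj u v := (u ∈ gball G o n ∧ v ∈ gball G o n ∧ G.Adj u v) ∨
    (u ∈ gball G o n \ gball G o (n - 2) ∧ v ∈ gball G o n \ gball G o (n - 2) ∧ u ≠ v)
  symm := by
    constructor
    rintro u v (⟨h1, h2, h3⟩ | ⟨h1, h2, h3⟩)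
    · exact Or.inl ⟨h2, h1, h3.symm⟩
    · exact Or.inr ⟨h2, h1, h3.symm⟩
  loopless := by
    constructor
    rintro u (⟨-, -, h⟩ | ⟨-, -, h⟩)
    · exact G.loopless.irrefl u h
    · exact h rfl

open scoped ENNReal


section MeasureAux

variable {α β : Type*} [MeasurableSpace α] [MeasurableSpace β]

lemma withDensity_map_equiv_aux (e : α ≃ᵐ β) (μ : Measure α) {g : α → ℝ≥0∞}
    (hg : Measurable g) :
    (μ.withDensity g).map e = (μ.map e).withDensity (fun y => g (e.symm y)) := by
  ext t ht
  rw [Measure.map_apply e.measurable ht, withDensity_apply _ (e.measurable ht),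
    withDensity_apply _ ht,
    setLIntegral_map (f := fun y => g (e.symm y)) ht (hg.comp e.symm.measurable) e.measurable]
  simp

lemma map_fst_withDensity_aux (ν₁ : Measure α) (ν₂ : Measure β) [SFinite ν₁] [SFinite ν₂]
    {g : α × β → ℝ≥0∞} (hg : Measurable g) :
    ((ν₁.prod ν₂).withDensity g).map Prod.fst
      = ν₁.withDensity (fun a => ∫⁻ b, g (a, b) ∂ν₂) := by
  ext t ht
  rw [Measure.map_apply measurable_fst ht, withDensity_apply _ (measurable_fst ht),
    withDensity_apply _ ht]
  have hset : (Prod.fst ⁻¹' t : Set (α × β)) = t ×ˢ Set.univ := by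
    ext z; simp
  have hres : (ν₁.prod ν₂).restrict (t ×ˢ Set.univ) = (ν₁.restrict t).prod ν₂ := by
    rw [← Measure.prod_restrict, Measure.restrict_univ]
  rw [hset]
  show ∫⁻ x, g x ∂((ν₁.prod ν₂).restrict (t ×ˢ Set.univ)) = _
  rw [hres, lintegral_prod _ hg.aemeasurable]

end MeasureAux

section GraphAux

variable {V : Type*} (G : SimpleGraph V) (o : V)

lemma gball_mono {m n : ℕ} (h : m ≤ n) : gball G o m ⊆ gball G o n :=
  fun _ hv => ⟨hv.1, le_trans hv.2 h⟩

lemma gdist_le_add {o k u : V} (h1 : G.Reachable o k) (h2 : G.Reachable k u) :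
    G.dist o u ≤ G.dist o k + G.dist k u := by
  obtain ⟨p, hp⟩ := h1.exists_walk_length_eq_dist
  obtain ⟨q, hq⟩ := h2.exists_walk_length_eq_dist
  calc G.dist o u ≤ (p.append q).length := SimpleGraph.dist_le _
  _ = _ := by rw [SimpleGraph.Walk.length_append, hp, hq]

lemma twoClique_subset_gball {n : ℕ} (hn : 4 ≤ n) {K : Finset V}
    (hK : TwoClique G (K : Set V)) {k₀ : V} (hk₀ : k₀ ∈ K)
    (hball : k₀ ∈ gball G o (n - 2)) : (K : Set V) ⊆ gball G o n := by
  intro u hu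
  by_cases h : u = k₀
  · exact gball_mono G o (by omega) (h ▸ hball)
  · obtain ⟨hr, hd⟩ := hK k₀ (by simpa using hk₀) u hu (fun he => h he.symm)
    refine ⟨hball.1.trans hr, ?_⟩
    have := gdist_le_add G hball.1 hr
    have h2 := hball.2
    omega

lemma adj_twoClique_aug {n : ℕ} {u v : V} (h : (augGraph G o n).Adj u v) :
    (augGraph G o n).Reachable u v ∧ (augGraph G o n).dist u v ≤ 2 := by
  refine ⟨h.reachable, le_trans (SimpleGraph.dist_le h.toWalk) ?_⟩
  simp [SimpleGraph.Walk.length_cons]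

lemma adj_or_mid {u v : V} (hr : G.Reachable u v) (huv : u ≠ v) (hd : G.dist u v ≤ 2) :
    G.Adj u v ∨ ∃ w, G.Adj u w ∧ G.Adj w v := by
  obtain ⟨p, hp⟩ := hr.exists_walk_length_eq_dist
  cases p with
  | nil => exact absurd rfl huv
  | cons hadj q =>
    cases q with
    | nil => exact Or.inl hadj
    | cons hadj2 r =>
      have hr0 : r.length = 0 := by
        simp only [SimpleGraph.Walk.length_cons] at hp
        omega
      have hwv := SimpleGraph.Walk.eq_of_length_eq_zero hr0
      subst hwv
      exact Or.inr ⟨_, hadj, hadj2⟩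

lemma twoClique_aug {n : ℕ} (hn : 4 ≤ n) {K : Finset V} (hK : TwoClique G (K : Set V))
    (hsub : (K : Set V) ⊆ gball G o n) : TwoClique (augGraph G o n) (K : Set V) := by
  intro u hu v hv huv
  obtain ⟨hr, hd⟩ := hK u hu v hv huv
  have hun : u ∈ gball G o n := hsub hu
  have hvn : v ∈ gball G o n := hsub hv
  have key : ∀ a b w : V, a ∈ gball G o n → b ∈ gball G o n → a ∈ gball G o (n - 2) →
      G.Adj a w → G.Adj w b →
      (augGraph G o n).Reachable a b ∧ (augGraph G o n).dist a b ≤ 2 := by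
    intro a b w han hbn ha2 haw hwb
    have hwn : w ∈ gball G o n := by
      refine ⟨ha2.1.trans haw.reachable, ?_⟩
      have h1 := gdist_le_add G ha2.1 haw.reachable
      have h2 : G.dist a w ≤ 1 := le_trans (SimpleGraph.dist_le haw.toWalk) (by simp)
      have h3 := ha2.2
      omega
    have a1 : (augGraph G o n).Adj a w := Or.inl ⟨han, hwn, haw⟩
    have a2 : (augGraph G o n).Adj w b := Or.inl ⟨hwn, hbn, hwb⟩
    refine ⟨a1.reachable.trans a2.reachable,
      le_trans (SimpleGraph.dist_le (a1.toWalk.append a2.toWalk)) ?_⟩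
    simp [SimpleGraph.Walk.length_append]
  rcases adj_or_mid G hr huv hd with hadj | ⟨w, hadj, hadj2⟩
  · exact adj_twoClique_aug G o (Or.inl ⟨hun, hvn, hadj⟩)
  · by_cases hu2 : u ∈ gball G o (n - 2)
    · exact key u v w hun hvn hu2 hadj hadj2
    · by_cases hv2 : v ∈ gball G o (n - 2)
      · have := key v u w hvn hun hv2 hadj2.symm hadj.symm
        exact ⟨this.1.symm, by rw [SimpleGraph.dist_comm]; exact this.2⟩
      · exact adj_twoClique_aug G o (Or.inr ⟨⟨hun, hu2⟩, ⟨hvn, hv2⟩, huv⟩)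

lemma mem_cl2Finset_iff {V : Type*} [Fintype V] (G : SimpleGraph V) (K : Finset V) :
    K ∈ cl2Finset G ↔ TwoClique G (K : Set V) := by
  classical
  simp [cl2Finset]

lemma clique_C_aug {V : Type*} [Fintype V] (G : SimpleGraph V) (o : V) {n : ℕ}
    (hn : 4 ≤ n) {K : Finset V} (hK : K ∈ cl2Finset G)
    (hC : K = ∅ ∨ ∃ v ∈ K, v ∈ gball G o (n - 2)) :
    (K : Set V) ⊆ gball G o n ∧ K ∈ cl2Finset (augGraph G o n) := by
  rcases hC with rfl | ⟨k₀, hk, hb⟩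
  · refine ⟨by simp, (mem_cl2Finset_iff _ _).mpr ?_⟩
    intro u hu
    simp at hu
  · have hsub := twoClique_subset_gball G o hn ((mem_cl2Finset_iff _ _).mp hK) hk hb
    exact ⟨hsub, (mem_cl2Finset_iff _ _).mpr
      (twoClique_aug G o hn ((mem_cl2Finset_iff _ _).mp hK) hsub)⟩

end GraphAux


open scoped Classical in
/-- If `μ` has a 2-clique factorized density over a finite graph `G`, then its marginal on
the ball `V_n` has a density which factorizes over the 2-cliques of the augmented ball
graph `G_n`, consistently with the original factors on 2-cliques contained in `V_{n-3}`. -/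
theorem marginal_twoClique_factorization {V X : Type*} [Fintype V]
    [MeasurableSpace X] [StandardBorelSpace X] [Nonempty X]
    (G : SimpleGraph V) (o : V) (n : ℕ) (hn : 4 ≤ n)
    (θ : V → Measure X) [∀ v, IsProbabilityMeasure (θ v)]
    (f : Finset V → (V → X) → ℝ≥0∞)
    (hfmeas : ∀ K, Measurable (f K))
    (hfloc : ∀ K, ∀ x y : V → X, (∀ v ∈ K, x v = y v) → f K x = f K y)
    (μ : Measure (V → X)) [IsProbabilityMeasure μ]
    (hμ : μ = (Measure.pi θ).withDensity (fun x => ∏ K ∈ cl2Finset G, f K x)) :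
    ∃ f0 : Finset V → (↥(gball G o n) → X) → ℝ≥0∞,
      (∀ K, Measurable (f0 K)) ∧
      (∀ K : Finset V, ∀ x y : ↥(gball G o n) → X,
        (∀ v : ↥(gball G o n), (v : V) ∈ K → x v = y v) → f0 K x = f0 K y) ∧
      μ.map (fun x (v : ↥(gball G o n)) => x (v : V)) =
        (Measure.pi fun v : ↥(gball G o n) => θ (v : V)).withDensity
          (fun x => ∏ K ∈ cl2Finset (augGraph G o n), f0 K x) ∧
      ∀ K ∈ cl2Finset G, (K : Set V) ⊆ gball G o (n - 3) →
        ∀ x : V → X, f0 K (fun v => x (v : V)) = f K x := by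
  classical
  subst hμ
  set Dg : (V → X) → ℝ≥0∞ := fun x => ∏ K ∈ cl2Finset G, f K x with hDg
  have hDgm : Measurable Dg := Finset.measurable_prod _ fun K _ => hfmeas K
  set e : (V → X) ≃ᵐ ((↥(gball G o n) → X) × ({v : V // ¬ v ∈ gball G o n} → X)) :=
    MeasurableEquiv.piEquivPiSubtypeProd (fun _ : V => X) (fun v => v ∈ gball G o n) with he
  set ν₂ : Measure ({v : V // ¬ v ∈ gball G o n} → X) := Measure.pi fun v => θ v.1 with hν₂
  have hesymm : ∀ (a : ↥(gball G o n) → X) (b : {v : V // ¬ v ∈ gball G o n} → X) (v : V),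
      e.symm (a, b) v = if h : v ∈ gball G o n then a ⟨v, h⟩ else b ⟨v, h⟩ :=
    fun a b v => rfl
  set extf : (↥(gball G o n) → X) → V → X :=
    fun a v => if h : v ∈ gball G o n then a ⟨v, h⟩ else Classical.arbitrary X with hextf
  have hextm : Measurable extf := by
    refine measurable_pi_lambda _ fun v => ?_
    by_cases h : v ∈ gball G o n
    · simp only [hextf, dif_pos h]
      exact measurable_pi_apply _
    · simp only [hextf, dif_neg h]
      exact measurable_const
  set S₁ : Finset (Finset V) := (cl2Finset G).filter
      (fun K => K = ∅ ∨ ∃ v ∈ K, v ∈ gball G o (n - 2)) with hS₁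
  set S₂ : Finset (Finset V) := (cl2Finset G).filter
      (fun K => ¬(K = ∅ ∨ ∃ v ∈ K, v ∈ gball G o (n - 2))) with hS₂
  have hS₁prop : ∀ K ∈ S₁, (K : Set V) ⊆ gball G o n ∧ K ∈ cl2Finset (augGraph G o n) := by
    intro K hK
    rw [hS₁, Finset.mem_filter] at hK
    exact clique_C_aug G o hn hK.1 hK.2
  set hfun : (↥(gball G o n) → X) → ℝ≥0∞ :=
      fun a => ∫⁻ b, ∏ K ∈ S₂, f K (e.symm (a, b)) ∂ν₂ with hhfun
  have hhm : Measurable hfun := by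
    rw [hhfun]
    exact Measurable.lintegral_prod_right'
      (f := fun z => ∏ K ∈ S₂, f K (e.symm z))
      (Finset.measurable_prod _ fun K _ => (hfmeas K).comp e.symm.measurable)
  have hUloc : ∀ a a' : ↥(gball G o n) → X,
      (∀ v : ↥(gball G o n), (v : V) ∈ gball G o n \ gball G o (n - 2) → a v = a' v) →
      hfun a = hfun a' := by
    intro a a' hag
    rw [hhfun]
    refine lintegral_congr fun b => Finset.prod_congr rfl fun K hK => ?_
    rw [hS₂, Finset.mem_filter] at hK
    obtain ⟨hKcl, hKn⟩ := hK
    push_neg at hKn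
    obtain ⟨hKne, hKdisj⟩ := hKn
    refine hfloc K _ _ fun v hv => ?_
    have h2 : v ∉ gball G o (n - 2) := hKdisj v hv
    rw [hesymm, hesymm]
    by_cases hvs : v ∈ gball G o n
    · rw [dif_pos hvs, dif_pos hvs]
      exact hag ⟨v, hvs⟩ ⟨hvs, h2⟩
    · rw [dif_neg hvs, dif_neg hvs]
  obtain ⟨K₀, hK₀cl, hK₀loc, hK₀pin⟩ :
      ∃ K₀ : Finset V, K₀ ∈ cl2Finset (augGraph G o n) ∧
        (∀ a a' : ↥(gball G o n) → X,
          (∀ v : ↥(gball G o n), (v : V) ∈ K₀ → a v = a' v) → hfun a = hfun a') ∧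
        (∀ K : Finset V, (K : Set V) ⊆ gball G o (n - 3) → K = K₀ →
          ∀ a, hfun a = 1) := by
    by_cases hU : (gball G o n \ gball G o (n - 2)).Nonempty
    · refine ⟨(Set.toFinite (gball G o n \ gball G o (n - 2))).toFinset, ?_, ?_, ?_⟩
      · rw [mem_cl2Finset_iff]
        intro u hu v hv huv
        rw [Finset.mem_coe, Set.Finite.mem_toFinset] at hu hv
        exact adj_twoClique_aug G o (Or.inr ⟨hu, hv, huv⟩)
      · intro a a' hag
        refine hUloc a a' fun v hv => hag v ?_
        rw [Set.Finite.mem_toFinset]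
        exact hv
      · intro K hKsub hKeq a
        exfalso
        obtain ⟨u, hu⟩ := hU
        have hmem : u ∈ K := by
          rw [hKeq, Set.Finite.mem_toFinset]
          exact hu
        have h3 := hKsub (Finset.mem_coe.mpr hmem)
        exact hu.2 (gball_mono G o (by omega) h3)
    · by_cases hW : ((gball G o n)ᶜ).Nonempty
      · refine ⟨{hW.choose}, ?_, ?_, ?_⟩
        · rw [mem_cl2Finset_iff]
          intro u hu v hv huv
          rw [Finset.mem_coe, Finset.mem_singleton] at hu hv
          exact absurd (hu.trans hv.symm) huv
        · intro a a' hag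
          exact hUloc a a' fun v hv => absurd (Set.nonempty_of_mem hv) hU
        · intro K hKsub hKeq a
          exfalso
          have hmem : hW.choose ∈ K := by
            rw [hKeq]
            exact Finset.mem_singleton_self _
          exact hW.choose_spec (gball_mono G o (by omega) (hKsub (Finset.mem_coe.mpr hmem)))
      · refine ⟨∅, ?_, ?_, ?_⟩
        · rw [mem_cl2Finset_iff]
          intro u hu
          simp at hu
        · intro a a' hag
          exact hUloc a a' fun v hv => absurd (Set.nonempty_of_mem hv) hU
        · intro K _ _ a
          have hS₂e : S₂ = ∅ := by
            rw [hS₂, Finset.eq_empty_iff_forall_notMem]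
            intro K' hK'
            rw [Finset.mem_filter] at hK'
            apply hK'.2
            rcases Finset.eq_empty_or_nonempty K' with he0 | ⟨v, hv⟩
            · exact Or.inl he0
            · refine Or.inr ⟨v, hv, ?_⟩
              have hvn : v ∈ gball G o n := by
                by_contra hc
                exact hW ⟨v, hc⟩
              by_contra hc
              exact hU ⟨v, hvn, hc⟩
          rw [hhfun]
          simp [hS₂e]
  have hS₁T : S₁ ⊆ cl2Finset (augGraph G o n) := fun K hK => (hS₁prop K hK).2
  refine ⟨fun K a => (if K ∈ S₁ then f K (extf a) else 1) * (if K = K₀ then hfun a else 1),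
    ?_, ?_, ?_, ?_⟩
  · intro K
    refine Measurable.mul ?_ ?_
    · split_ifs with h
      · exact (hfmeas K).comp hextm
      · exact measurable_const
    · split_ifs with h
      · exact hhm
      · exact measurable_const
  · intro K x y hxy
    have h1 : (if K ∈ S₁ then f K (extf x) else 1) = (if K ∈ S₁ then f K (extf y) else 1) := by
      split_ifs with h
      · refine hfloc K _ _ fun v hv => ?_
        simp only [hextf]
        by_cases hvs : v ∈ gball G o n
        · simp only [dif_pos hvs]
          exact hxy ⟨v, hvs⟩ hv
        · simp only [dif_neg hvs]
      · rfl
    have h2 : (if K = K₀ then hfun x else 1) = (if K = K₀ then hfun y else 1) := by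
      split_ifs with h
      · exact hK₀loc x y fun v hv => hxy v (h ▸ hv)
      · rfl
    show (if K ∈ S₁ then f K (extf x) else 1) * (if K = K₀ then hfun x else 1) =
        (if K ∈ S₁ then f K (extf y) else 1) * (if K = K₀ then hfun y else 1)
    rw [h1, h2]
  · have hmp := measurePreserving_piEquivPiSubtypeProd θ (fun v => v ∈ gball G o n)
    rw [← he] at hmp
    have hcmp : (fun x (v : ↥(gball G o n)) => x (v : V)) = Prod.fst ∘ ⇑e := rfl
    rw [hcmp, ← Measure.map_map measurable_fst e.measurable,
      withDensity_map_equiv_aux e _ hDgm, hmp.map_eq,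
      map_fst_withDensity_aux (g := fun y => Dg (e.symm y)) _ _
        (hDgm.comp e.symm.measurable)]
    rw [← hν₂]
    refine congrArg _ (funext fun a => ?_)
    have hsplit : ∀ b, Dg (e.symm (a, b)) =
        (∏ K ∈ S₁, f K (extf a)) * ∏ K ∈ S₂, f K (e.symm (a, b)) := by
      intro b
      show (∏ K ∈ cl2Finset G, f K (e.symm (a, b))) = _
      rw [← Finset.prod_filter_mul_prod_filter_not (cl2Finset G)
        (fun K => K = ∅ ∨ ∃ v ∈ K, v ∈ gball G o (n - 2)), ← hS₁, ← hS₂]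
      congr 1
      refine Finset.prod_congr rfl fun K hK => ?_
      refine hfloc K _ _ fun v hv => ?_
      have hvs : v ∈ gball G o n := (hS₁prop K hK).1 (Finset.mem_coe.mpr hv)
      rw [hesymm, dif_pos hvs]
      simp only [hextf, dif_pos hvs]
    calc ∫⁻ b, Dg (e.symm (a, b)) ∂ν₂
        = ∫⁻ b, (∏ K ∈ S₁, f K (extf a)) * ∏ K ∈ S₂, f K (e.symm (a, b)) ∂ν₂ :=
          lintegral_congr fun b => hsplit b
      _ = (∏ K ∈ S₁, f K (extf a)) * hfun a := by
          rw [lintegral_const_mul (∏ K ∈ S₁, f K (extf a))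
            (show Measurable fun b => ∏ K ∈ S₂, f K (e.symm (a, b)) from
              Finset.measurable_prod _ fun K _ =>
                (hfmeas K).comp (e.symm.measurable.comp measurable_prodMk_left))]
      _ = ∏ K ∈ cl2Finset (augGraph G o n),
            ((if K ∈ S₁ then f K (extf a) else 1) * (if K = K₀ then hfun a else 1)) := by
          rw [Finset.prod_mul_distrib, Finset.prod_ite_mem,
            Finset.inter_eq_right.mpr hS₁T, Finset.prod_ite_eq', if_pos hK₀cl]
  · intro K hK hKsub x
    have hC : K = ∅ ∨ ∃ v ∈ K, v ∈ gball G o (n - 2) := by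
      rcases Finset.eq_empty_or_nonempty K with he0 | ⟨v, hv⟩
      · exact Or.inl he0
      · exact Or.inr ⟨v, hv, gball_mono G o (by omega) (hKsub (Finset.mem_coe.mpr hv))⟩
    have hmem : K ∈ S₁ := by
      rw [hS₁, Finset.mem_filter]
      exact ⟨hK, hC⟩
    show (if K ∈ S₁ then f K (extf fun v => x (v : V)) else 1) *
        (if K = K₀ then hfun (fun v => x (v : V)) else 1) = f K x
    rw [if_pos hmem]
    have h2 : (if K = K₀ then hfun (fun v => x (v : V)) else 1) = 1 := by
      split_ifs with h
      · exact hK₀pin K hKsub h _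
      · rfl
    rw [h2, mul_one]
    refine hfloc K _ _ fun v hv => ?_
    have hvn : v ∈ gball G o n :=
      gball_mono G o (by omega) (hKsub (Finset.mem_coe.mpr hv))
    simp only [hextf, dif_pos hvn]
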